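/- arXiv:2505.12022 — 10 statements merged into one kernel-verified Lean document; each statement's English description precedes it below -/
import Mathlib

section
/- Let G = (V,E) be a finite simple graph, let k be a natural number, and let lb be a natural number such that θ(G,k) ≥ lb. If u ∈ V is a vertex such that the clique number of the subgraph of G induced on the open neighborhood N(u) is at most lb − 2, then θ(G,k) = θ(G[V ∖ {u}], k), i.e., deleting u does not change the optimal interdiction value. -/
open SimpleGraph

private lemma aux_card_le {α β : Type*} [Fintype β] (A : SimpleGraph α) (B : SimpleGraph β)
    (s : Finset α) (hs : A.IsClique ↑s) (f : ∀ x ∈ s, β)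
    (hinj : ∀ x hx y hy, f x hx = f y hy → x = y)
    (hadj : ∀ x hx y hy, A.Adj x y → B.Adj (f x hx) (f y hy)) :
    s.card ≤ B.cliqueNum := by
  classical
  set t : Finset β := s.attach.image (fun x => f x.1 x.2) with ht
  have hcard : t.card = s.card := by
    rw [ht, Finset.card_image_of_injective, Finset.card_attach]
    intro x y hxy
    exact Subtype.ext (hinj _ x.2 _ y.2 hxy)
  have hc : B.IsClique ↑t := by
    intro b hb b' hb' hne
    rw [Finset.mem_coe, ht, Finset.mem_image] at hb hb'
    obtain ⟨x, -, rfl⟩ := hb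
    obtain ⟨y, -, rfl⟩ := hb'
    have hxy : (x : α) ≠ (y : α) := by
      intro e
      exact hne (by cases Subtype.ext e; rfl)
    exact hadj _ x.2 _ y.2 (hs x.2 y.2 hxy)
  calc s.card = t.card := hcard.symm
    _ ≤ B.cliqueNum := IsClique.card_le_cliqueNum (tc := hc)

/-- `theta G k` is the minimum, over all vertex subsets `S` with `|S| ≤ k`, of the
clique number of the subgraph of `G` induced on the complement of `S`. -/
noncomputable def theta {V : Type*} (G : SimpleGraph V) (k : ℕ) : ℕ :=
  sInf {m | ∃ S : Finset V, S.card ≤ k ∧ (G.induce ((↑S : Set V)ᶜ)).cliqueNum = m}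

theorem exact_clique_reduction {V : Type*} [Fintype V] (G : SimpleGraph V) (k lb : ℕ)
    (hlb : lb ≤ theta G k) (u : V)
    (h : ((G.induce (G.neighborSet u)).cliqueNum : ℤ) ≤ (lb : ℤ) - 2) :
    theta G k = theta (G.induce ({u}ᶜ : Set V)) k := by
  classical
  set A : Set ℕ := {m | ∃ S : Finset V, S.card ≤ k ∧ (G.induce ((↑S : Set V)ᶜ)).cliqueNum = m}
    with hA
  set B : Set ℕ := {m | ∃ S : Finset ({u}ᶜ : Set V),
      S.card ≤ k ∧ ((G.induce ({u}ᶜ : Set V)).induce ((↑S : Set ({u}ᶜ : Set V))ᶜ)).cliqueNum = m}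
    with hB
  have hthA : theta G k = sInf A := rfl
  have hthB : theta (G.induce ({u}ᶜ : Set V)) k = sInf B := rfl
  rw [hthA, hthB]
  apply le_antisymm
  · -- sInf A ≤ sInf B
    refine le_csInf ⟨_, ⟨∅, by simp, rfl⟩⟩ ?_
    rintro m ⟨S', hS'k, rfl⟩
    set T : Finset V := S'.image Subtype.val with hT
    have hTk : T.card ≤ k := le_trans (Finset.card_image_le) hS'k
    have hmem : (G.induce ((↑T : Set V)ᶜ)).cliqueNum ∈ A := ⟨T, hTk, rfl⟩
    refine le_trans (Nat.sInf_le hmem) ?_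
    obtain ⟨s, hs⟩ := (G.induce ((↑T : Set V)ᶜ)).exists_isNClique_cliqueNum
    rw [← hs.card_eq]
    by_cases hu : ∃ x ∈ s, (x : V) = u
    · -- contradiction case
      exfalso
      obtain ⟨x0, hx0, hx0u⟩ := hu
      have h1 : s.card - 1 ≤ (G.induce (G.neighborSet u)).cliqueNum := by
        rw [← Finset.card_erase_of_mem hx0]
        refine aux_card_le _ _ (s.erase x0)
          (hs.isClique.subset (by simp [Finset.erase_subset]))
          (fun x hx => ⟨(x : V), ?_⟩) ?_ ?_
        · have hne : x ≠ x0 := (Finset.mem_erase.mp hx).1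
          have hadj : G.Adj (x0 : V) (x : V) :=
            hs.isClique hx0 (Finset.mem_erase.mp hx).2 (fun e => hne e.symm)
          rw [hx0u] at hadj
          exact hadj
        · intro x hx y hy hxy
          have h' := congrArg Subtype.val hxy
          exact Subtype.ext h'
        · intro x hx y hy hadj
          exact hadj
      have h2 : 1 ≤ s.card := Finset.card_pos.mpr ⟨x0, hx0⟩
      have h3 : lb ≤ s.card := by
        rw [hs.card_eq]
        exact le_trans hlb (le_trans (le_of_eq hthA) (Nat.sInf_le hmem))
      have h4 : ((s.card : ℤ) - 1) ≤ ((G.induce (G.neighborSet u)).cliqueNum : ℤ) := by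
        have := Nat.cast_le (α := ℤ) |>.mpr h1
        omega
      have h5 : (lb : ℤ) ≤ (s.card : ℤ) := Nat.cast_le.mpr h3
      omega
    · push_neg at hu
      refine aux_card_le _ _ s hs.isClique
        (fun x hx => ⟨⟨(x : V), by simpa using hu x hx⟩, ?_⟩) ?_ ?_
      · intro hmem'
        have hxT : (x : V) ∈ T :=
          Finset.mem_image.mpr ⟨_, Finset.mem_coe.mp hmem', rfl⟩
        exact x.2 hxT
      · intro x hx y hy hxy
        have h' := congrArg Subtype.val (congrArg Subtype.val hxy)
        exact Subtype.ext h'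
      · intro x hx y hy hadj
        exact hadj
  · -- sInf B ≤ sInf A
    refine le_csInf ⟨_, ⟨∅, by simp, rfl⟩⟩ ?_
    rintro m ⟨S, hSk, rfl⟩
    set S' : Finset ({u}ᶜ : Set V) := S.subtype (fun x => x ∈ ({u}ᶜ : Set V)) with hS'
    have hS'k : S'.card ≤ k := by
      rw [hS', Finset.card_subtype]
      exact le_trans (Finset.card_filter_le _ _) hSk
    have hmem : ((G.induce ({u}ᶜ : Set V)).induce ((↑S' : Set ({u}ᶜ : Set V))ᶜ)).cliqueNum ∈ B :=
      ⟨S', hS'k, rfl⟩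
    refine le_trans (Nat.sInf_le hmem) ?_
    obtain ⟨s, hs⟩ :=
      ((G.induce ({u}ᶜ : Set V)).induce ((↑S' : Set ({u}ᶜ : Set V))ᶜ)).exists_isNClique_cliqueNum
    rw [← hs.card_eq]
    refine aux_card_le _ _ s hs.isClique (fun x hx => ⟨((x : ({u}ᶜ : Set V)) : V), ?_⟩) ?_ ?_
    · intro hmem'
      have : (x : ({u}ᶜ : Set V)) ∈ S' :=
        Finset.mem_subtype.mpr (Finset.mem_coe.mp hmem')
      exact x.2 this
    · intro x hx y hy hxy
      have h' := congrArg Subtype.val hxy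
      exact Subtype.ext (Subtype.ext h')
    · intro x hx y hy hadj
      exact hadj
end

section
/- Let G = (V,E) be a finite simple graph and let u, v ∈ V be two adjacent vertices. If the clique number of the subgraph induced on N(u) is strictly less than the clique number of the subgraph induced on N(v), then the clique number of the subgraph induced on N(v) ∖ {u} equals the clique number of the subgraph induced on N(v). -/
open SimpleGraph

/-- From a clique (as a finset of `V`) inside `S`, lower-bound the clique number of `G.induce S`. -/
lemma card_le_cliqueNum_induce {V : Type*} [Fintype V] (G : SimpleGraph V) (S : Set V)
    (t : Finset V) (hts : ↑t ⊆ S) (hc : G.IsClique ↑t) :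
    t.card ≤ (G.induce S).cliqueNum := by
  classical
  let f : {x // x ∈ t} ↪ S := ⟨fun x => ⟨x.1, hts x.2⟩, fun a b hab =>
    Subtype.ext (Subtype.mk_eq_mk.mp hab)⟩
  have hcard : (t.attach.map f).card = t.card := by simp
  have hclique : (G.induce S).IsClique ↑(t.attach.map f) := by
    intro a ha b hb hab
    simp only [Finset.coe_map, Set.mem_image, Finset.mem_coe, Finset.mem_attach,
      true_and] at ha hb
    obtain ⟨x, hx⟩ := ha
    obtain ⟨y, hy⟩ := hb
    subst hx hy
    have hxy : (x : V) ≠ (y : V) := by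
      intro hxy
      exact hab (congrArg f (Subtype.ext hxy))
    exact hc x.2 y.2 hxy
  calc t.card = (t.attach.map f).card := hcard.symm
    _ ≤ (G.induce S).cliqueNum := hclique.card_le_cliqueNum

/-- From the clique number of `G.induce S` extract a clique as a finset of `V` inside `S`. -/
lemma exists_clique_of_induce {V : Type*} [Fintype V] (G : SimpleGraph V) (S : Set V) :
    ∃ t : Finset V, ↑t ⊆ S ∧ G.IsClique ↑t ∧ t.card = (G.induce S).cliqueNum := by
  classical
  obtain ⟨s, hs⟩ := (G.induce S).exists_isNClique_cliqueNum
  refine ⟨s.image Subtype.val, ?_, ?_, ?_⟩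
  · intro x hx
    simp only [Finset.coe_image, Set.mem_image, Finset.mem_coe] at hx
    obtain ⟨y, _, rfl⟩ := hx
    exact y.2
  · intro a ha b hb hab
    simp only [Finset.coe_image, Set.mem_image, Finset.mem_coe] at ha hb
    obtain ⟨x, hx, rfl⟩ := ha
    obtain ⟨y, hy, rfl⟩ := hb
    have hxy : x ≠ y := fun hxy => hab (by rw [hxy])
    exact hs.isClique hx hy hxy
  · rw [Finset.card_image_of_injective _ Subtype.val_injective, hs.card_eq]

theorem clique_neighbor_lemma {V : Type*} [Fintype V] (G : SimpleGraph V) (u v : V)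
    (hadj : G.Adj u v)
    (h : (G.induce (G.neighborSet u)).cliqueNum < (G.induce (G.neighborSet v)).cliqueNum) :
    (G.induce (G.neighborSet v \ {u})).cliqueNum = (G.induce (G.neighborSet v)).cliqueNum := by
  classical
  apply le_antisymm
  · obtain ⟨t, hts, hc, hcard⟩ := exists_clique_of_induce G (G.neighborSet v \ {u})
    rw [← hcard]
    exact card_le_cliqueNum_induce G _ t (fun x hx => (hts hx).1) hc
  · obtain ⟨t, hts, hc, hcard⟩ := exists_clique_of_induce G (G.neighborSet v)
    by_cases hu : u ∈ t
    · -- build a clique of size cliqueNum(N(v)) inside N(u); contradiction with h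
      exfalso
      set t' : Finset V := insert v (t.erase u) with ht'
      have hvt : v ∉ t := fun hvt => G.irrefl (hts hvt)
      have hsub : ↑t' ⊆ G.neighborSet u := by
        intro x hx
        simp only [ht', Finset.coe_insert, Set.mem_insert_iff, Finset.coe_erase,
          Set.mem_diff, Finset.mem_coe, Set.mem_singleton_iff] at hx
        rcases hx with rfl | ⟨hxt, hxu⟩
        · exact hadj
        · exact hc hu hxt (Ne.symm hxu)
      have hclique' : G.IsClique ↑t' := by
        intro a ha b hb hab
        simp only [ht', Finset.coe_insert, Set.mem_insert_iff, Finset.coe_erase,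
          Set.mem_diff, Finset.mem_coe, Set.mem_singleton_iff] at ha hb
        rcases ha with rfl | ⟨hat, hau⟩
        · rcases hb with rfl | ⟨hbt, hbu⟩
          · exact absurd rfl hab
          · exact hts hbt
        · rcases hb with rfl | ⟨hbt, hbu⟩
          · exact (hts hat).symm
          · exact hc hat hbt hab
      have hcard' : t'.card = t.card := by
        rw [ht', Finset.card_insert_of_notMem (by simp [hvt]),
          Finset.card_erase_of_mem hu]
        omega
      have := card_le_cliqueNum_induce G (G.neighborSet u) t' hsub hclique'
      rw [hcard', hcard] at this
      omega
    · rw [← hcard]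
      apply card_le_cliqueNum_induce G _ t _ hc
      intro x hx
      exact ⟨hts hx, fun hxu => hu (by rwa [hxu] at hx)⟩
end

section
/- Let G = (V,E) be a finite simple graph, let k and lb be natural numbers with θ(G,k) ≥ lb, and let c : V → ℕ be a proper coloring of G (adjacent vertices receive distinct colors). If u ∈ V is a vertex whose saturation ds_c(u), defined as the number of distinct colors appearing on the open neighborhood N(u), satisfies ds_c(u) ≤ lb − 2, then θ(G,k) = θ(G[V ∖ {u}], k). -/
open SimpleGraph

lemma theta_nonempty {V : Type*} (G : SimpleGraph V) (k : ℕ) :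
    {m | ∃ S : Finset V, S.card ≤ k ∧ (G.induce ((↑S : Set V)ᶜ)).cliqueNum = m}.Nonempty :=
  ⟨_, ∅, by simp, rfl⟩

lemma cliqueNum_le_of_emb {α β : Type*} [Fintype α] [Fintype β]
    {A : SimpleGraph α} {B : SimpleGraph β} (f : A ↪g B) :
    A.cliqueNum ≤ B.cliqueNum := by
  obtain ⟨s, hs⟩ := A.exists_isNClique_cliqueNum
  have hcl : B.IsClique ↑(s.map f.toEmbedding) := by
    rw [Finset.coe_map]
    intro x hx y hy hxy
    obtain ⟨a, ha, rfl⟩ := hx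
    obtain ⟨b, hb, rfl⟩ := hy
    exact f.map_adj_iff.2 (hs.1 ha hb (fun hab => hxy (by rw [hab])))
  have := hcl.card_le_cliqueNum
  rwa [Finset.card_map, hs.2] at this

theorem color_reduction {V : Type*} [Fintype V] (G : SimpleGraph V) (k lb : ℕ)
    (hlb : lb ≤ theta G k) (c : V → ℕ)
    (hc : ∀ a b : V, G.Adj a b → c a ≠ c b) (u : V)
    (h : ((c '' G.neighborSet u).ncard : ℤ) ≤ (lb : ℤ) - 2) :
    theta G k = theta (G.induce ({u}ᶜ : Set V)) k := by
  classical
  set G' := G.induce ({u}ᶜ : Set V) with hG'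
  haveI : Fintype ↥({u}ᶜ : Set V) := Fintype.ofFinite _
  apply le_antisymm
  · -- theta G k ≤ theta G' k
    obtain ⟨S', hS'card, hS'eq⟩ := Nat.sInf_mem (theta_nonempty G' k)
    set S : Finset V := S'.image Subtype.val with hS
    have hScard : S.card ≤ k := by
      rw [hS, Finset.card_image_of_injective _ Subtype.val_injective]; exact hS'card
    have hmemS : ∀ (x : ↥({u}ᶜ : Set V)), (↑x : V) ∈ S ↔ x ∈ S' := by
      intro x
      constructor
      · intro hx
        obtain ⟨y, hy, hyx⟩ := Finset.mem_image.1 hx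
        rwa [Subtype.val_injective hyx] at hy
      · intro hx
        exact Finset.mem_image_of_mem _ hx
    have key : (G.induce ((↑S : Set V)ᶜ)).cliqueNum ≤ theta G' k := by
      haveI : Fintype ↥((↑S : Set V)ᶜ) := Fintype.ofFinite _
      obtain ⟨t, ht⟩ := (G.induce ((↑S : Set V)ᶜ)).exists_isNClique_cliqueNum
      by_cases hu : ∃ w ∈ t, (↑w : V) = u
      · -- clique contains u : contradiction with lb
        exfalso
        obtain ⟨w, hw, hwu⟩ := hu
        have hsub : (t.erase w).image (fun x : ↥((↑S : Set V)ᶜ) => c ↑x) ⊆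
            (G.neighborFinset u).image c := by
          intro n hn
          obtain ⟨x, hx, rfl⟩ := Finset.mem_image.1 hn
          refine Finset.mem_image.2 ⟨↑x, ?_, rfl⟩
          rw [SimpleGraph.mem_neighborFinset, ← hwu]
          have hadj := ht.1 hw (Finset.mem_of_mem_erase hx)
            (fun he => (Finset.mem_erase.1 hx).1 he.symm)
          exact hadj
        have hinj : Set.InjOn (fun x : ↥((↑S : Set V)ᶜ) => c ↑x) ↑(t.erase w) := by
          intro x hx y hy hxy
          by_contra hne
          exact hc _ _
            (ht.1 (Finset.mem_of_mem_erase hx) (Finset.mem_of_mem_erase hy) hne) hxy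
        have hcard1 : (t.erase w).card ≤ ((G.neighborFinset u).image c).card := by
          rw [← Finset.card_image_of_injOn hinj]
          exact Finset.card_le_card hsub
        have hncard : (c '' G.neighborSet u).ncard = ((G.neighborFinset u).image c).card := by
          rw [← Set.ncard_coe_finset]
          congr 1
          rw [Finset.coe_image, SimpleGraph.neighborFinset_def, Set.coe_toFinset]
        have hterase : t.card = (t.erase w).card + 1 := (Finset.card_erase_add_one hw).symm
        have hθle : theta G k ≤ t.card := by
          rw [ht.2]
          exact Nat.sInf_le ⟨S, hScard, rfl⟩
        omega
      · -- clique avoids u : lift it to G'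
        push_neg at hu
        have hmem' : ∀ (x : ↥((↑S : Set V)ᶜ)) (hx : x ∈ t),
            (⟨(↑x : V), hu x hx⟩ : ↥({u}ᶜ : Set V)) ∈ ((↑S' : Set ↥({u}ᶜ : Set V))ᶜ) := by
          intro x hx hmem
          exact x.2 ((hmemS _).2 hmem)
        set t' : Finset ↥((↑S' : Set ↥({u}ᶜ : Set V))ᶜ) :=
          t.attach.image (fun x => ⟨⟨(↑x.1 : V), hu x.1 x.2⟩, hmem' x.1 x.2⟩) with ht'
        have hcardt' : t'.card = t.card := by
          rw [ht', Finset.card_image_of_injOn, Finset.card_attach]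
          intro a _ b _ hab
          have hv : (↑(↑a : ↥((↑S : Set V)ᶜ)) : V) = ↑(↑b : ↥((↑S : Set V)ᶜ)) := by
            simpa [Subtype.ext_iff] using hab
          exact Subtype.ext (Subtype.ext hv)
        have hclt' : (G'.induce ((↑S' : Set ↥({u}ᶜ : Set V))ᶜ)).IsClique ↑t' := by
          intro x hx y hy hxy
          rw [ht', Finset.coe_image] at hx hy
          obtain ⟨a, -, rfl⟩ := hx
          obtain ⟨b, -, rfl⟩ := hy
          have hne : (a : {x // x ∈ t}).1 ≠ (b : {x // x ∈ t}).1 := by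
            intro he
            apply hxy
            simp only [Subtype.ext_iff]
            exact congrArg Subtype.val he
          exact ht.1 a.2 b.2 hne
        have := hclt'.card_le_cliqueNum
        rw [hcardt', hS'eq] at this
        rw [← ht.2]
        exact this
    calc theta G k ≤ (G.induce ((↑S : Set V)ᶜ)).cliqueNum := Nat.sInf_le ⟨S, hScard, rfl⟩
      _ ≤ theta G' k := key
  · -- theta G' k ≤ theta G k
    obtain ⟨S, hScard, hSeq⟩ := Nat.sInf_mem (theta_nonempty G k)
    set S' : Finset ↥({u}ᶜ : Set V) := S.preimage Subtype.val Subtype.val_injective.injOn with hS'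
    have hS'card : S'.card ≤ k := by
      have hsub : S'.image Subtype.val ⊆ S := by
        intro x hx
        obtain ⟨y, hy, rfl⟩ := Finset.mem_image.1 hx
        exact Finset.mem_preimage.1 hy
      calc S'.card = (S'.image Subtype.val).card :=
            (Finset.card_image_of_injective _ Subtype.val_injective).symm
        _ ≤ S.card := Finset.card_le_card hsub
        _ ≤ k := hScard
    haveI : Fintype ↥((↑S : Set V)ᶜ) := Fintype.ofFinite _
    haveI : Fintype ↥((↑S' : Set ↥({u}ᶜ : Set V))ᶜ) := Fintype.ofFinite _
    have hemb : (G'.induce ((↑S' : Set ↥({u}ᶜ : Set V))ᶜ)) ↪g (G.induce ((↑S : Set V)ᶜ)) := by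
      refine ⟨⟨fun x => ⟨(↑(↑x : ↥({u}ᶜ : Set V)) : V), ?_⟩, ?_⟩, ?_⟩
      · have hx := x.2
        simp only [Set.mem_compl_iff, Finset.mem_coe] at hx ⊢
        intro hmem
        exact hx (Finset.mem_preimage.2 hmem)
      · intro a b hab
        have hv : (↑(↑a : ↥({u}ᶜ : Set V)) : V) = ↑(↑b : ↥({u}ᶜ : Set V)) := by
          simpa [Subtype.ext_iff] using hab
        exact Subtype.ext (Subtype.ext hv)
      · intro a b
        simp [G', comap_adj]
        exact Iff.rfl
    calc theta G' k ≤ (G'.induce ((↑S' : Set ↥({u}ᶜ : Set V))ᶜ)).cliqueNum :=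
          Nat.sInf_le ⟨S', hS'card, rfl⟩
      _ ≤ (G.induce ((↑S : Set V)ᶜ)).cliqueNum := cliqueNum_le_of_emb hemb
      _ = theta G k := hSeq
end

section
/- Let G = (V,E) be a finite simple graph, let k and lb be natural numbers with θ(G,k) ≥ lb, and let {u,v} ∈ E be an edge such that the number of common neighbors |N(u) ∩ N(v)| is at most lb − 3. Then θ(G,k) = θ(G', k), where G' is the graph (V, E ∖ {{u,v}}) obtained from G by deleting the edge {u,v}. -/
open SimpleGraph

theorem triangle_reduction {V : Type*} [Fintype V] (G : SimpleGraph V) (k lb : ℕ)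
    (hlb : lb ≤ theta G k) (u v : V) (hadj : G.Adj u v)
    (h : ((G.neighborSet u ∩ G.neighborSet v).ncard : ℤ) ≤ (lb : ℤ) - 3) :
    theta G k = theta (G.deleteEdges {s(u, v)}) k := by
  classical
  set G' := G.deleteEdges {s(u, v)} with hG'
  have hn3 : (G.neighborSet u ∩ G.neighborSet v).ncard + 3 ≤ lb := by
    have : ((G.neighborSet u ∩ G.neighborSet v).ncard : ℤ) + 3 ≤ (lb : ℤ) := by linarith
    exact_mod_cast this
  have key : ∀ S : Finset V, S.card ≤ k →
      (G.induce ((↑S : Set V)ᶜ)).cliqueNum = (G'.induce ((↑S : Set V)ᶜ)).cliqueNum := by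
    intro S hS
    haveI : Fintype ((↑S : Set V)ᶜ : Set V) := Fintype.ofFinite _
    apply le_antisymm
    · obtain ⟨K, hK⟩ := (G.induce ((↑S : Set V)ᶜ)).exists_isNClique_cliqueNum
      have hcard : lb ≤ K.card := by
        rw [hK.card_eq]
        exact le_trans hlb (Nat.sInf_le ⟨S, hS, rfl⟩)
      have hclique : (G'.induce ((↑S : Set V)ᶜ)).IsClique (K : Set _) := by
        intro x hx y hy hxy
        have haxy : G.Adj (x : V) (y : V) := hK.isClique hx hy hxy
        refine ⟨haxy, ?_⟩
        intro hmem
        -- s(x,y) = s(u,v), so both u and v belong to the image of K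
        have heq : ((x : V) = u ∧ (y : V) = v ∨ (x : V) = v ∧ (y : V) = u) := by
          have h' := ((SimpleGraph.fromEdgeSet_adj _).mp hmem).1
          have h'' : s((x : V), (y : V)) = s(u, v) := by simpa using h'
          rwa [Sym2.eq_iff] at h''
        have huv : u ∈ K.image (Subtype.val) ∧ v ∈ K.image (Subtype.val) := by
          rcases heq with ⟨h1, h2⟩ | ⟨h1, h2⟩
          · exact ⟨Finset.mem_image.2 ⟨x, hx, h1⟩, Finset.mem_image.2 ⟨y, hy, h2⟩⟩
          · exact ⟨Finset.mem_image.2 ⟨y, hy, h2⟩, Finset.mem_image.2 ⟨x, hx, h1⟩⟩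
        -- every other vertex of K is a common neighbor of u and v
        set KV := K.image (Subtype.val) with hKV
        have hsub : KV \ {u, v} ⊆ (G.neighborSet u ∩ G.neighborSet v).toFinset := by
          intro w hw
          rw [Finset.mem_sdiff] at hw
          obtain ⟨hwK, hwuv⟩ := hw
          simp only [Finset.mem_insert, Finset.mem_singleton] at hwuv
          push_neg at hwuv
          obtain ⟨a, haK, hav⟩ := Finset.mem_image.1 hwK
          obtain ⟨b, hbK, hbv⟩ := Finset.mem_image.1 huv.1
          obtain ⟨c, hcK, hcv⟩ := Finset.mem_image.1 huv.2
          have hab : a ≠ b := fun hab => hwuv.1 (by rw [← hav, hab, hbv])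
          have hac : a ≠ c := fun hac => hwuv.2 (by rw [← hav, hac, hcv])
          have h1 : G.Adj w u := by
            have := hK.isClique haK hbK hab
            rw [comap_adj] at this
            simpa [hav, hbv] using this
          have h2 : G.Adj w v := by
            have := hK.isClique haK hcK hac
            rw [comap_adj] at this
            simpa [hav, hcv] using this
          simp [Set.mem_toFinset, h1.symm, h2.symm, SimpleGraph.mem_neighborSet]
        have hKVcard : KV.card = K.card :=
          Finset.card_image_of_injective _ Subtype.val_injective
        have hbound : KV.card ≤ (G.neighborSet u ∩ G.neighborSet v).ncard + 2 := by
          have h1 : (KV \ {u, v}).card ≤ (G.neighborSet u ∩ G.neighborSet v).ncard := by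
            have := Finset.card_le_card hsub
            rwa [Set.ncard_eq_toFinset_card'] 
          have h2 : KV.card ≤ (KV \ {u, v}).card + ({u, v} : Finset V).card :=
            Finset.card_le_card_sdiff_add_card
          have h3 : ({u, v} : Finset V).card ≤ 2 := Finset.card_insert_le _ _ |>.trans (by simp)
          omega
        omega
      calc (G.induce ((↑S : Set V)ᶜ)).cliqueNum = K.card := hK.card_eq.symm
        _ ≤ (G'.induce ((↑S : Set V)ᶜ)).cliqueNum := hclique.card_le_cliqueNum
    · obtain ⟨K, hK⟩ := (G'.induce ((↑S : Set V)ᶜ)).exists_isNClique_cliqueNum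
      have hclique : (G.induce ((↑S : Set V)ᶜ)).IsClique (K : Set _) := by
        intro x hx y hy hxy
        have := hK.isClique hx hy hxy
        rw [comap_adj] at this ⊢
        exact (deleteEdges_le _ this)
      calc (G'.induce ((↑S : Set V)ᶜ)).cliqueNum = K.card := hK.card_eq.symm
        _ ≤ (G.induce ((↑S : Set V)ᶜ)).cliqueNum := hclique.card_le_cliqueNum
  unfold theta
  congr 1
  ext m
  constructor
  · rintro ⟨S, hS, rfl⟩; exact ⟨S, hS, (key S hS).symm⟩
  · rintro ⟨S, hS, rfl⟩; exact ⟨S, hS, key S hS⟩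
end

section
/- Let G = (V,E) be a finite simple graph, let k be a natural number, let c : V → ℕ be a proper coloring of G, and let {u,v} ∈ E be an edge such that the number of distinct colors appearing on the common neighborhood, |{c(w) : w ∈ N(u) ∩ N(v)}|, is at most θ(G,k) − 3. Then θ(G,k) = θ(G', k), where G' is the graph (V, E ∖ {{u,v}}) obtained from G by deleting the edge {u,v}. -/
open SimpleGraph

lemma cliqueNum_mono {α : Type*} [Fintype α] {H G : SimpleGraph α} (hle : H ≤ G) :
    H.cliqueNum ≤ G.cliqueNum := by
  obtain ⟨s, hs⟩ := H.exists_isNClique_cliqueNum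
  have : G.IsClique s := hs.isClique.mono hle
  calc H.cliqueNum = s.card := hs.card_eq.symm
    _ ≤ G.cliqueNum := IsClique.card_le_cliqueNum (tc := this)

theorem triangle_color_reduction {V : Type*} [Fintype V] (G : SimpleGraph V) (k : ℕ)
    (c : V → ℕ) (hc : ∀ a b : V, G.Adj a b → c a ≠ c b)
    (u v : V) (hadj : G.Adj u v)
    (h : ((c '' (G.neighborSet u ∩ G.neighborSet v)).ncard : ℤ) ≤ (theta G k : ℤ) - 3) :
    theta G k = theta (G.deleteEdges {s(u, v)}) k := by
  classical
  set G' := G.deleteEdges {s(u, v)} with hG'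
  -- key: for any admissible S, theta G k ≤ cliqueNum (G'.induce Sᶜ) ≤ cliqueNum (G.induce Sᶜ)
  have key : ∀ S : Finset V, S.card ≤ k →
      theta G k ≤ (G'.induce ((↑S : Set V)ᶜ)).cliqueNum := by
    intro S hS
    haveI : Fintype ((↑S : Set V)ᶜ : Set V) := Fintype.ofFinite _
    have hθle : theta G k ≤ (G.induce ((↑S : Set V)ᶜ)).cliqueNum :=
      Nat.sInf_le ⟨S, hS, rfl⟩
    obtain ⟨K, hK⟩ := (G.induce ((↑S : Set V)ᶜ)).exists_isNClique_cliqueNum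
    by_cases hboth : ∃ (hu : u ∈ ((↑S : Set V)ᶜ)) (hv : v ∈ ((↑S : Set V)ᶜ)),
        (⟨u, hu⟩ : ((↑S : Set V)ᶜ : Set V)) ∈ K ∧ (⟨v, hv⟩ : ((↑S : Set V)ᶜ : Set V)) ∈ K
    · -- impossible: the clique minus {u,v} injects into the colors of N(u) ∩ N(v)
      exfalso
      obtain ⟨hu, hv, hKu, hKv⟩ := hboth
      set a : ((↑S : Set V)ᶜ : Set V) := ⟨u, hu⟩
      set b : ((↑S : Set V)ᶜ : Set V) := ⟨v, hv⟩
      have hab : a ≠ b := fun he => hadj.ne (congrArg Subtype.val he)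
      set T : Finset ((↑S : Set V)ᶜ : Set V) := (K.erase a).erase b with hT
      have hTcard : T.card = K.card - 2 := by
        rw [hT, Finset.card_erase_of_mem (Finset.mem_erase.mpr ⟨hab.symm, hKv⟩),
          Finset.card_erase_of_mem hKu]
        omega
      have hinj : Set.InjOn (fun w : ((↑S : Set V)ᶜ : Set V) => c w.val) ↑T := by
        intro w1 h1 w2 h2 hcc
        by_contra hne
        have hw1 : w1 ∈ K := Finset.mem_of_mem_erase (Finset.mem_of_mem_erase h1)
        have hw2 : w2 ∈ K := Finset.mem_of_mem_erase (Finset.mem_of_mem_erase h2)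
        exact hc _ _ (hK.isClique hw1 hw2 hne) hcc
      have himg : ↑(T.image (fun w : ((↑S : Set V)ᶜ : Set V) => c w.val))
          ⊆ c '' (G.neighborSet u ∩ G.neighborSet v) := by
        intro x hx
        simp only [Finset.coe_image, Set.mem_image, Finset.mem_coe] at hx
        obtain ⟨w, hw, rfl⟩ := hx
        have hwb : w ≠ b := (Finset.mem_erase.mp hw).1
        have hwa : w ≠ a := (Finset.mem_erase.mp (Finset.mem_of_mem_erase hw)).1
        have hwK : w ∈ K := Finset.mem_of_mem_erase (Finset.mem_of_mem_erase hw)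
        have h1 : G.Adj u w.val := hK.isClique hKu hwK (Ne.symm hwa)
        have h2 : G.Adj v w.val := hK.isClique hKv hwK (Ne.symm hwb)
        exact ⟨w.val, ⟨h1, h2⟩, rfl⟩
      have hn : K.card - 2 ≤ (c '' (G.neighborSet u ∩ G.neighborSet v)).ncard := by
        calc K.card - 2 = T.card := hTcard.symm
          _ = (T.image (fun w : ((↑S : Set V)ᶜ : Set V) => c w.val)).card :=
            (Finset.card_image_of_injOn hinj).symm
          _ = (↑(T.image (fun w : ((↑S : Set V)ᶜ : Set V) => c w.val)) : Set ℕ).ncard :=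
            (Set.ncard_coe_finset _).symm
          _ ≤ (c '' (G.neighborSet u ∩ G.neighborSet v)).ncard :=
            Set.ncard_le_ncard himg (Set.toFinite _)
      have h2K : 2 ≤ K.card := by
        have : ({a, b} : Finset _) ⊆ K := by
          intro x hx
          rcases Finset.mem_insert.mp hx with rfl | hx
          · exact hKu
          · exact (Finset.mem_singleton.mp hx) ▸ hKv
        calc 2 = ({a, b} : Finset _).card := (Finset.card_pair hab).symm
          _ ≤ K.card := Finset.card_le_card this
      have hθK : theta G k ≤ K.card := hK.card_eq ▸ hθle
      omega
    · -- K is also a clique in G'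
      push_neg at hboth
      have hclique : (G'.induce ((↑S : Set V)ᶜ)).IsClique ↑K := by
        intro w1 h1 w2 h2 hne
        have hGadj : G.Adj w1.val w2.val := hK.isClique h1 h2 hne
        refine ⟨hGadj, ?_⟩
        intro heq
        simp only [fromEdgeSet_adj, Set.mem_singleton_iff, Sym2.eq_iff,
          Function.Embedding.coe_subtype] at heq
        rcases heq with ⟨⟨e1, e2⟩ | ⟨e1, e2⟩, -⟩
        · exact hboth (e1 ▸ w1.2) (e2 ▸ w2.2)
            (by rwa [show (⟨u, e1 ▸ w1.2⟩ : ((↑S : Set V)ᶜ : Set V)) = w1 from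
              Subtype.ext e1.symm])
            (by rwa [show (⟨v, e2 ▸ w2.2⟩ : ((↑S : Set V)ᶜ : Set V)) = w2 from
              Subtype.ext e2.symm])
        · exact hboth (e2 ▸ w2.2) (e1 ▸ w1.2)
            (by rwa [show (⟨u, e2 ▸ w2.2⟩ : ((↑S : Set V)ᶜ : Set V)) = w2 from
              Subtype.ext e2.symm])
            (by rwa [show (⟨v, e1 ▸ w1.2⟩ : ((↑S : Set V)ᶜ : Set V)) = w1 from
              Subtype.ext e1.symm])
      calc theta G k ≤ K.card := hK.card_eq ▸ hθle
        _ ≤ (G'.induce ((↑S : Set V)ᶜ)).cliqueNum := IsClique.card_le_cliqueNum (tc := hclique)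
  -- conclude
  have hne : {m | ∃ S : Finset V, S.card ≤ k ∧ (G.induce ((↑S : Set V)ᶜ)).cliqueNum = m}.Nonempty :=
    ⟨_, ⟨∅, by simp, rfl⟩⟩
  obtain ⟨S0, hS0, hval⟩ : theta G k ∈
      {m | ∃ S : Finset V, S.card ≤ k ∧ (G.induce ((↑S : Set V)ᶜ)).cliqueNum = m} :=
    Nat.sInf_mem hne
  refine le_antisymm ?_ ?_
  · -- theta G k ≤ theta G' k : every member of the G' set is ≥ theta G k
    refine le_csInf ⟨_, ⟨∅, by simp, rfl⟩⟩ ?_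
    rintro m ⟨S, hS, rfl⟩
    exact key S hS
  · -- theta G' k ≤ theta G k : use S0
    haveI : Fintype ((↑S0 : Set V)ᶜ : Set V) := Fintype.ofFinite _
    have hup : (G'.induce ((↑S0 : Set V)ᶜ)).cliqueNum ≤ theta G k := by
      rw [← hval]
      exact cliqueNum_mono (fun x y hxy => hxy.1)
    exact le_trans (Nat.sInf_le ⟨S0, hS0, rfl⟩) hup
end

section
/- Let G = (V,E) be a finite simple graph, let k > 0 be a natural number, and let u ∈ V be a vertex such that for every vertex v ∈ V ∖ N[u] one has ω(G[N(u)]) − k > ω(G[N(v)]). Then θ(G,k) = θ(G[V ∖ {u}], k − 1). -/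
open SimpleGraph

section Helpers

variable {W : Type*}

lemma isClique_induce_iff (H : SimpleGraph W) (s : Set W) (t : Finset s) :
    (H.induce s).IsClique (t : Set s) ↔
      H.IsClique ((t.map (Function.Embedding.subtype _)) : Set W) := by
  constructor
  · intro hc x hx y hy hxy
    rw [Finset.coe_map] at hx hy
    obtain ⟨a, ha, rfl⟩ := hx
    obtain ⟨b, hb, rfl⟩ := hy
    have hab : a ≠ b := fun e => hxy (by rw [e])
    have := hc ha hb hab
    simpa using this
  · intro hc x hx y hy hxy
    have hx' : (Function.Embedding.subtype _) x ∈ t.map (Function.Embedding.subtype _) :=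
      Finset.mem_map_of_mem _ hx
    have hy' : (Function.Embedding.subtype _) y ∈ t.map (Function.Embedding.subtype _) :=
      Finset.mem_map_of_mem _ hy
    have hne : ((Function.Embedding.subtype _) x : W) ≠ (Function.Embedding.subtype _) y := by
      simpa [Subtype.ext_iff] using hxy
    have := hc hx' hy' hne
    simpa using this

lemma exists_finset_lift {s : Set W} (t : Finset W) (hts : ↑t ⊆ s) :
    ∃ t' : Finset s, t'.map (Function.Embedding.subtype _) = t := by
  classical
  refine ⟨t.subtype (· ∈ s), ?_⟩
  rw [Finset.subtype_map]
  exact Finset.filter_true_of_mem (fun x hx => hts hx)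

lemma card_le_cliqueNum_induce_s7 [Fintype W] (H : SimpleGraph W) {s : Set W}
    (t : Finset W) (hts : ↑t ⊆ s) (hc : H.IsClique (t : Set W)) :
    t.card ≤ (H.induce s).cliqueNum := by
  classical
  haveI : Fintype s := Fintype.ofFinite s
  obtain ⟨t', ht'⟩ := exists_finset_lift t hts
  have hc' : (H.induce s).IsClique (t' : Set s) := by
    rw [_root_.isClique_induce_iff, ht']; exact hc
  have hle := IsClique.card_le_cliqueNum (tc := hc')
  rw [← ht', Finset.card_map]
  exact hle

lemma exists_max_clique_induce [Fintype W] (H : SimpleGraph W) (s : Set W) :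
    ∃ t : Finset W, ↑t ⊆ s ∧ H.IsClique (t : Set W) ∧ t.card = (H.induce s).cliqueNum := by
  classical
  haveI : Fintype s := Fintype.ofFinite s
  obtain ⟨t', ht'⟩ := (H.induce s).exists_isNClique_cliqueNum
  refine ⟨t'.map (Function.Embedding.subtype _), ?_, ?_, ?_⟩
  · intro x hx
    rw [Finset.coe_map] at hx
    obtain ⟨a, _, rfl⟩ := hx
    simpa using a.2
  · rw [← _root_.isClique_induce_iff]
    exact ht'.isClique
  · rw [Finset.card_map]
    exact ht'.card_eq

lemma theta_le {V : Type*} (G : SimpleGraph V) (k : ℕ) (S : Finset V) (hS : S.card ≤ k) :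
    theta G k ≤ (G.induce ((↑S : Set V)ᶜ)).cliqueNum :=
  Nat.sInf_le ⟨S, hS, rfl⟩

lemma theta_attained {V : Type*} (G : SimpleGraph V) (k : ℕ) :
    ∃ S : Finset V, S.card ≤ k ∧ (G.induce ((↑S : Set V)ᶜ)).cliqueNum = theta G k := by
  have hne : {m | ∃ S : Finset V, S.card ≤ k ∧ (G.induce ((↑S : Set V)ᶜ)).cliqueNum = m}.Nonempty :=
    ⟨_, ∅, by simp, rfl⟩
  exact Nat.sInf_mem hne

end Helpers

theorem interdiction_reduction {V : Type*} [Fintype V] (G : SimpleGraph V) (k : ℕ)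
    (hk : 0 < k) (u : V)
    (h : ∀ v : V, v ∉ insert u (G.neighborSet u) →
      ((G.induce (G.neighborSet u)).cliqueNum : ℤ) - (k : ℤ) >
        ((G.induce (G.neighborSet v)).cliqueNum : ℤ)) :
    theta G k = theta (G.induce ({u}ᶜ : Set V)) (k - 1) := by
  classical
  haveI : Fintype ({u}ᶜ : Set V) := Fintype.ofFinite _
  set G' : SimpleGraph ({u}ᶜ : Set V) := G.induce ({u}ᶜ : Set V) with hG'
  apply le_antisymm
  · -- theta G k ≤ theta G' (k-1)
    obtain ⟨T', hT'card, hT'⟩ := theta_attained G' (k - 1)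
    set Tv : Finset V := T'.map (Function.Embedding.subtype _) with hTv
    have hScard : (insert u Tv).card ≤ k := by
      have := Finset.card_insert_le u Tv
      have : (insert u Tv).card ≤ T'.card + 1 := by
        simpa [hTv, Finset.card_map] using Finset.card_insert_le u Tv
      omega
    refine le_trans (theta_le G k (insert u Tv) hScard) ?_
    rw [← hT']
    obtain ⟨t, hts, htc, htcard⟩ := exists_max_clique_induce G ((↑(insert u Tv) : Set V)ᶜ)
    rw [← htcard]
    have htu : (↑t : Set V) ⊆ ({u}ᶜ : Set V) := by
      intro x hx
      have := hts hx
      simp only [Set.mem_compl_iff, Finset.coe_insert, Set.mem_insert_iff] at this ⊢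
      intro hxu
      exact this (Or.inl hxu)
    obtain ⟨t', ht'map⟩ := exists_finset_lift t htu
    have htc' : G'.IsClique (t' : Set ({u}ᶜ : Set V)) := by
      rw [hG', _root_.isClique_induce_iff, ht'map]; exact htc
    have hsub : (↑t' : Set ({u}ᶜ : Set V)) ⊆ ((↑T' : Set ({u}ᶜ : Set V)))ᶜ := by
      intro x hx hxT
      have hxt : (x : V) ∈ t := by
        rw [← ht'map]
        exact Finset.mem_map_of_mem _ hx
      have hxTv : (x : V) ∈ Tv := Finset.mem_map_of_mem _ hxT
      have := hts hxt
      simp only [Set.mem_compl_iff, Finset.coe_insert, Set.mem_insert_iff] at this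
      exact this (Or.inr (by exact_mod_cast hxTv))
    have := card_le_cliqueNum_induce_s7 G' t' hsub htc'
    rwa [← ht'map, Finset.card_map]
  · -- theta G' (k-1) ≤ theta G k
    obtain ⟨S, hScard, hS⟩ := theta_attained G k
    set m := theta G k with hm
    by_cases huS : u ∈ S
    · -- easy case: u ∈ S
      have hsub : (↑(S.erase u) : Set V) ⊆ ({u}ᶜ : Set V) := by
        intro x hx
        simp only [Finset.coe_erase, Set.mem_diff, Set.mem_singleton_iff] at hx
        simpa using hx.2
      obtain ⟨T', hT'map⟩ := exists_finset_lift (S.erase u) hsub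
      have hT'card : T'.card ≤ k - 1 := by
        have h1 : T'.card = (S.erase u).card := by rw [← hT'map, Finset.card_map]
        have h2 := Finset.card_erase_of_mem huS
        omega
      refine le_trans (theta_le G' (k - 1) T' hT'card) ?_
      obtain ⟨t', hts', htc', htcard'⟩ := exists_max_clique_induce G' ((↑T' : Set ({u}ᶜ : Set V))ᶜ)
      rw [← htcard']
      set t : Finset V := t'.map (Function.Embedding.subtype _) with ht
      have htc : G.IsClique (t : Set V) := by
        rw [ht, ← _root_.isClique_induce_iff]; exact htc'
      have htsub : (↑t : Set V) ⊆ ((↑S : Set V))ᶜ := by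
        intro x hx
        rw [ht, Finset.coe_map] at hx
        obtain ⟨a, ha, rfl⟩ := hx
        simp only [Set.mem_compl_iff, Finset.mem_coe]
        intro hxS
        have hxu : (a : V) ≠ u := fun e => a.2 (by simp [e])
        have hxe : (a : V) ∈ S.erase u := Finset.mem_erase.mpr ⟨hxu, hxS⟩
        rw [← hT'map] at hxe
        obtain ⟨b, hb, hba⟩ := Finset.mem_map.mp hxe
        have : b = a := Subtype.ext (by simpa using hba)
        subst this
        exact (hts' ha) hb
      have := card_le_cliqueNum_induce_s7 G t htsub htc
      rw [hS] at this
      rwa [ht, Finset.card_map] at this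
    · -- hard case: u ∉ S
      set ωN := (G.induce (G.neighborSet u)).cliqueNum with hωN
      set F : Finset V := S.filter (fun x => G.Adj u x) with hF
      have hFS : F ⊆ S := Finset.filter_subset _ _
      have hFk : F.card ≤ k := le_trans (Finset.card_le_card hFS) hScard
      -- Step 1: ωN ≤ m + |F| - 1 over ℤ
      have step1 : (ωN : ℤ) ≤ (m : ℤ) + (F.card : ℤ) - 1 := by
        obtain ⟨t, hts, htc, htcard⟩ := exists_max_clique_induce G (G.neighborSet u)
        set t₂ : Finset V := t \ S with ht₂
        have ht₂c : G.IsClique (t₂ : Set V) := htc.subset (by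
          rw [ht₂, Finset.coe_sdiff]; exact Set.diff_subset)
        have hut₂ : u ∉ t₂ := by
          intro hu
          have : u ∈ (↑t : Set V) := by
            have := Finset.mem_sdiff.mp hu
            exact this.1
          exact G.irrefl (hts this)
        have hins : G.IsClique (↑(insert u t₂) : Set V) := by
          rw [Finset.coe_insert]
          refine ht₂c.insert (fun b hb hbu => ?_)
          have hbt : b ∈ (↑t : Set V) := by
            have := Finset.mem_sdiff.mp hb
            exact this.1
          exact hts hbt
        have hinsS : (↑(insert u t₂) : Set V) ⊆ ((↑S : Set V))ᶜ := by
          intro x hx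
          rw [Finset.coe_insert] at hx
          simp only [Set.mem_compl_iff, Finset.mem_coe]
          rcases hx with rfl | hx
          · exact fun hc => huS hc
          · have := Finset.mem_sdiff.mp hx
            exact this.2
        have hcard1 : (insert u t₂).card ≤ m := by
          have := card_le_cliqueNum_induce_s7 G (insert u t₂) hinsS hins
          rwa [hS] at this
        have hcard2 : (insert u t₂).card = t₂.card + 1 := Finset.card_insert_of_notMem hut₂
        have hinter : t.card = (t ∩ S).card + t₂.card := (Finset.card_inter_add_card_sdiff t S).symm
        have hiF : (t ∩ S) ⊆ F := by
          intro x hx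
          obtain ⟨hxt, hxS⟩ := Finset.mem_inter.mp hx
          rw [hF, Finset.mem_filter]
          exact ⟨hxS, hts (by exact_mod_cast hxt)⟩
        have hiFc : (t ∩ S).card ≤ F.card := Finset.card_le_card hiF
        have : t.card = ωN := htcard
        push_cast
        omega
      -- Step 2: choose T ⊆ F with |T| ≤ k-1 and |F \ T| ≤ 1
      obtain ⟨T, hTF, hTcard, hFT1⟩ :
          ∃ T : Finset V, T ⊆ F ∧ T.card ≤ k - 1 ∧ (F \ T).card ≤ 1 := by
        by_cases hF1 : F.card ≤ k - 1
        · exact ⟨F, le_refl _, hF1, by simp⟩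
        · have hFk' : F.card = k := by omega
          have hFne : F.Nonempty := Finset.card_pos.mp (by omega)
          obtain ⟨w, hw⟩ := hFne
          refine ⟨F.erase w, Finset.erase_subset _ _, ?_, ?_⟩
          · rw [Finset.card_erase_of_mem hw]; omega
          · have : F \ F.erase w ⊆ {w} := by
              intro x hx
              obtain ⟨hx1, hx2⟩ := Finset.mem_sdiff.mp hx
              simp only [Finset.mem_erase] at hx2
              push_neg at hx2
              have : x = w := by
                by_contra hne
                exact hx2 hne hx1
              simp [this]
            calc (F \ F.erase w).card ≤ ({w} : Finset V).card := Finset.card_le_card this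
              _ = 1 := Finset.card_singleton w
      -- Step 3
      have hTu : (↑T : Set V) ⊆ ({u}ᶜ : Set V) := by
        intro x hx
        have hxS : x ∈ S := hFS (hTF hx)
        simp only [Set.mem_compl_iff, Set.mem_singleton_iff]
        rintro rfl
        exact huS hxS
      obtain ⟨T', hT'map⟩ := exists_finset_lift T hTu
      have hT'card : T'.card ≤ k - 1 := by
        have : T'.card = T.card := by rw [← hT'map, Finset.card_map]
        omega
      refine le_trans (theta_le G' (k - 1) T' hT'card) ?_
      obtain ⟨t', hts', htc', htcard'⟩ := exists_max_clique_induce G' ((↑T' : Set ({u}ᶜ : Set V))ᶜ)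
      rw [← htcard']
      set K : Finset V := t'.map (Function.Embedding.subtype _) with hK
      have hKc : G.IsClique (K : Set V) := by
        rw [hK, ← _root_.isClique_induce_iff]; exact htc'
      have hKcard : K.card = t'.card := by rw [hK, Finset.card_map]
      rw [← hKcard]
      -- facts about K
      have hKu : u ∉ K := by
        intro hu
        rw [hK] at hu
        obtain ⟨a, _, ha⟩ := Finset.mem_map.mp hu
        have := a.2
        simp only [Set.mem_compl_iff, Set.mem_singleton_iff] at this
        exact this (by simpa using ha)
      have hKT : ∀ x ∈ K, x ∉ T := by
        intro x hxK hxT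
        rw [hK] at hxK
        obtain ⟨a, ha, rfl⟩ := Finset.mem_map.mp hxK
        rw [← hT'map] at hxT
        obtain ⟨b, hb, hba⟩ := Finset.mem_map.mp hxT
        have : b = a := Subtype.ext (by simpa using hba)
        subst this
        exact (hts' ha) hb
      by_cases hKN : ∀ x ∈ K, G.Adj u x
      · -- K ⊆ N(u)
        set K₂ : Finset V := K \ S with hK₂
        have hK₂c : G.IsClique (K₂ : Set V) := hKc.subset (by
          rw [hK₂, Finset.coe_sdiff]; exact Set.diff_subset)
        have huK₂ : u ∉ K₂ := fun hu => hKu (Finset.mem_sdiff.mp hu).1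
        have hins : G.IsClique (↑(insert u K₂) : Set V) := by
          rw [Finset.coe_insert]
          refine hK₂c.insert (fun b hb hbu => ?_)
          exact hKN b (Finset.mem_sdiff.mp hb).1
        have hinsS : (↑(insert u K₂) : Set V) ⊆ ((↑S : Set V))ᶜ := by
          intro x hx
          rw [Finset.coe_insert] at hx
          simp only [Set.mem_compl_iff, Finset.mem_coe]
          rcases hx with rfl | hx
          · exact fun hc => huS hc
          · exact (Finset.mem_sdiff.mp hx).2
        have hcard1 : (insert u K₂).card ≤ m := by
          have := card_le_cliqueNum_induce_s7 G (insert u K₂) hinsS hins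
          rwa [hS] at this
        have hcard2 : (insert u K₂).card = K₂.card + 1 := Finset.card_insert_of_notMem huK₂
        have hinter : K.card = (K ∩ S).card + K₂.card := (Finset.card_inter_add_card_sdiff K S).symm
        have hKSsub : K ∩ S ⊆ F \ T := by
          intro x hx
          obtain ⟨hxK, hxS⟩ := Finset.mem_inter.mp hx
          rw [Finset.mem_sdiff]
          constructor
          · rw [hF, Finset.mem_filter]; exact ⟨hxS, hKN x hxK⟩
          · exact hKT x hxK
        have hKS1 : (K ∩ S).card ≤ 1 := le_trans (Finset.card_le_card hKSsub) hFT1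
        omega
      · -- some vertex of K is not adjacent to u
        push_neg at hKN
        obtain ⟨v, hvK, hvu⟩ := hKN
        have hvne : v ≠ u := fun e => hKu (e ▸ hvK)
        have hvN : v ∉ insert u (G.neighborSet u) := by
          simp only [Set.mem_insert_iff, mem_neighborSet]
          push_neg
          exact ⟨hvne, hvu⟩
        have hv := h v hvN
        have hKe : (K.erase v).card ≤ (G.induce (G.neighborSet v)).cliqueNum := by
          refine card_le_cliqueNum_induce_s7 G (K.erase v) ?_ (hKc.subset (by
            rw [Finset.coe_erase]; exact Set.diff_subset))
          intro x hx
          rw [Finset.coe_erase] at hx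
          obtain ⟨hxK, hxv⟩ := hx
          have : x ≠ v := by simpa using hxv
          exact hKc hxK (by exact_mod_cast hvK) this |>.symm
        have hKec : (K.erase v).card + 1 = K.card := Finset.card_erase_add_one hvK
        have hgoal : (K.card : ℤ) ≤ m := by
          push_cast at hKe step1 hv ⊢
          omega
        exact_mod_cast hgoal
end

section
/- Let G = (V,E) be a finite simple graph, let k > 0 be a natural number, and let u ∈ V be a vertex such that for every vertex v ∈ V ∖ N[u] one has ω(G[N(u)]) − k > ω(G[N(v)]). Then there exists an optimal interdiction set containing u, i.e., there exists S ⊆ V with |S| ≤ k, u ∈ S, and ω(G[V ∖ S]) = θ(G,k). -/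
open SimpleGraph

private lemma aux_card_le_s8 {V : Type*} [Fintype V] (G : SimpleGraph V) (A : Set V)
    (t : Finset V) (ht : G.IsClique ↑t) (hsub : ↑t ⊆ A) :
    t.card ≤ (G.induce A).cliqueNum := by
  classical
  have : Fintype ↥A := Fintype.ofFinite _
  set s : Finset ↥A := t.subtype (· ∈ A) with hs
  have hcard : s.card = t.card := by
    rw [hs, Finset.card_subtype, Finset.filter_true_of_mem (fun x hx => hsub hx)]
  have hclique : (G.induce A).IsClique ↑s := by
    intro x hx y hy hxy
    have hx' : (x : V) ∈ t := by simpa [hs] using hx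
    have hy' : (y : V) ∈ t := by simpa [hs] using hy
    exact ht hx' hy' (fun hh => hxy (Subtype.ext hh))
  rw [← hcard]
  exact IsClique.card_le_cliqueNum (tc := hclique)

private lemma aux_exists {V : Type*} [Fintype V] (G : SimpleGraph V) (A : Set V) :
    ∃ t : Finset V, ↑t ⊆ A ∧ G.IsClique ↑t ∧ t.card = (G.induce A).cliqueNum := by
  classical
  have : Fintype ↥A := Fintype.ofFinite _
  obtain ⟨s, hs⟩ := (G.induce A).exists_isNClique_cliqueNum
  refine ⟨s.map ⟨Subtype.val, Subtype.coe_injective⟩, ?_, ?_, ?_⟩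
  · intro x hx
    simp only [Finset.coe_map, Set.mem_image, Finset.mem_coe] at hx
    obtain ⟨y, _, rfl⟩ := hx
    exact y.2
  · intro x hx y hy hxy
    simp only [Finset.coe_map, Set.mem_image, Finset.mem_coe] at hx hy
    obtain ⟨x', hx', rfl⟩ := hx
    obtain ⟨y', hy', rfl⟩ := hy
    exact hs.isClique hx' hy' (fun hh => hxy (congrArg _ hh))
  · rw [Finset.card_map]; exact hs.card_eq

private lemma aux_mono {V : Type*} [Fintype V] (G : SimpleGraph V) {A B : Set V}
    (hAB : A ⊆ B) : (G.induce A).cliqueNum ≤ (G.induce B).cliqueNum := by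
  obtain ⟨t, h1, h2, h3⟩ := aux_exists G A
  rw [← h3]
  exact aux_card_le_s8 G B t h2 (h1.trans hAB)

private lemma aux_remove {V : Type*} [Fintype V] (G : SimpleGraph V) (A : Set V)
    (T : Finset V) :
    (G.induce A).cliqueNum ≤ (G.induce (A \ ↑T)).cliqueNum + T.card := by
  classical
  obtain ⟨t, h1, h2, h3⟩ := aux_exists G A
  have hsub : ↑(t \ T) ⊆ A \ (↑T : Set V) := by
    intro x hx
    simp only [Finset.coe_sdiff, Set.mem_diff, Finset.mem_coe] at hx ⊢
    exact ⟨h1 hx.1, hx.2⟩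
  have hle : (t \ T).card ≤ (G.induce (A \ ↑T)).cliqueNum :=
    aux_card_le_s8 G _ _ (h2.subset (by rw [Finset.coe_sdiff]; exact Set.diff_subset)) hsub
  calc (G.induce A).cliqueNum = t.card := h3.symm
    _ ≤ (t \ T).card + T.card := Finset.card_le_card_sdiff_add_card
    _ ≤ _ := by omega

theorem interdiction_optimal_set {V : Type*} [Fintype V] (G : SimpleGraph V) (k : ℕ)
    (hk : 0 < k) (u : V)
    (h : ∀ v : V, v ∉ insert u (G.neighborSet u) →
      ((G.induce (G.neighborSet u)).cliqueNum : ℤ) - (k : ℤ) >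
        ((G.induce (G.neighborSet v)).cliqueNum : ℤ)) :
    ∃ S : Finset V, S.card ≤ k ∧ u ∈ S ∧
      (G.induce ((↑S : Set V)ᶜ)).cliqueNum = theta G k := by
  classical
  set nbr : Set V := G.neighborSet u with hnbr
  set a : ℕ := (G.induce nbr).cliqueNum with ha
  -- the set of achievable values for β
  set B : Set ℕ := {m | ∃ T : Finset V, ↑T ⊆ nbr ∧ T.card ≤ k - 1 ∧
      (G.induce (nbr \ ↑T)).cliqueNum = m} with hB
  have hBne : B.Nonempty := by
    refine ⟨(G.induce (nbr \ ↑(∅ : Finset V))).cliqueNum, ∅, by simp, by simp, rfl⟩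
  set β : ℕ := sInf B with hβ
  obtain ⟨T, hTsub, hTcard, hTval⟩ : β ∈ B := Nat.sInf_mem hBne
  -- L1 : a ≤ β + (k-1)
  have hL1 : a ≤ β + (k - 1) := by
    rw [← hTval]
    calc a ≤ (G.induce (nbr \ ↑T)).cliqueNum + T.card := aux_remove G nbr T
      _ ≤ _ := by omega
  -- the candidate interdiction set
  set S : Finset V := insert u T with hS
  have hunbr : u ∉ nbr := fun hu => G.irrefl hu
  have huT : u ∉ T := fun hu => hunbr (hTsub hu)
  have hScard : S.card ≤ k := by
    rw [hS, Finset.card_insert_of_notMem huT]; omega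
  -- the key numeric fact from h, in ℕ
  have hnum : ∀ v : V, v ∉ insert u nbr →
      (G.induce (G.neighborSet v)).cliqueNum + k < a := by
    intro v hv
    have := h v hv
    omega
  -- ω(G - S) ≤ β
  have hup : (G.induce ((↑S : Set V)ᶜ)).cliqueNum ≤ β := by
    obtain ⟨t, h1, h2, h3⟩ := aux_exists G ((↑S : Set V)ᶜ)
    rw [← h3]
    by_cases hcase : ∃ v ∈ t, v ∉ insert u nbr
    · obtain ⟨v, hvt, hv⟩ := hcase
      have herase : ↑(t.erase v) ⊆ G.neighborSet v := by
        intro x hx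
        have hx' := Finset.mem_erase.mp hx
        have := h2 (Finset.mem_coe.mpr hx'.2) (Finset.mem_coe.mpr hvt) hx'.1
        exact this.symm
      have hle : (t.erase v).card ≤ (G.induce (G.neighborSet v)).cliqueNum :=
        aux_card_le_s8 G _ _ (h2.subset (by simp)) herase
      have hec : (t.erase v).card = t.card - 1 := Finset.card_erase_of_mem hvt
      have htpos : 1 ≤ t.card := Finset.card_pos.mpr ⟨v, hvt⟩
      have := hnum v hv
      omega
    · push_neg at hcase
      have hsub : ↑t ⊆ nbr \ (↑T : Set V) := by
        intro x hx
        have hxS : x ∉ (↑S : Set V) := h1 hx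
        have hxin := hcase x (Finset.mem_coe.mp hx)
        rw [Set.mem_insert_iff] at hxin
        have hxu : x ≠ u := by
          rintro rfl
          exact hxS (by simp [hS])
        refine ⟨hxin.resolve_left hxu, fun hxT => hxS ?_⟩
        simp only [hS, Finset.coe_insert, Set.mem_insert_iff]
        exact Or.inr hxT
      rw [← hTval]
      exact aux_card_le_s8 G _ _ h2 hsub
  -- θ ≤ ω(G - S)
  have hθle : theta G k ≤ (G.induce ((↑S : Set V)ᶜ)).cliqueNum :=
    Nat.sInf_le ⟨S, hScard, rfl⟩
  -- β ≤ θ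
  have hβθ : β ≤ theta G k := by
    have hne : {m | ∃ S : Finset V, S.card ≤ k ∧
        (G.induce ((↑S : Set V)ᶜ)).cliqueNum = m}.Nonempty :=
      ⟨(G.induce ((↑(∅ : Finset V) : Set V)ᶜ)).cliqueNum, ∅, by simp, rfl⟩
    obtain ⟨S₀, hS₀card, hS₀val⟩ := Nat.sInf_mem hne
    rw [theta, ← hS₀val]
    set T₀ : Finset V := S₀.filter (· ∈ nbr) with hT₀
    have hT₀sub : ↑T₀ ⊆ nbr := by
      intro x hx
      exact (Finset.mem_filter.mp (Finset.mem_coe.mp hx)).2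
    have hT₀S₀ : T₀ ⊆ S₀ := Finset.filter_subset _ _
    have hcompl : nbr \ (↑T₀ : Set V) ⊆ (↑S₀ : Set V)ᶜ := by
      intro x hx hxS₀
      exact hx.2 (Finset.mem_coe.mpr (Finset.mem_filter.mpr ⟨hxS₀, hx.1⟩))
    by_cases hu : u ∈ S₀
    · -- T₀ has card ≤ k - 1
      have huT₀ : u ∉ T₀ := fun hh => hunbr (hT₀sub hh)
      have hT₀card : T₀.card ≤ k - 1 := by
        have : T₀ ⊆ S₀.erase u := fun x hx =>
          Finset.mem_erase.mpr ⟨fun he => huT₀ (he ▸ hx), hT₀S₀ hx⟩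
        have h1 := Finset.card_le_card this
        have h2 := Finset.card_erase_of_mem hu
        omega
      calc β ≤ (G.induce (nbr \ ↑T₀)).cliqueNum := Nat.sInf_le ⟨T₀, hT₀sub, hT₀card, rfl⟩
        _ ≤ _ := aux_mono G hcompl
    · -- u ∉ S₀ : add u to a max clique of nbr \ T₀
      obtain ⟨t, h1, h2, h3⟩ := aux_exists G (nbr \ ↑T₀)
      have hut : u ∉ t := fun hh => hunbr (h1 hh).1
      have hclique : G.IsClique ↑(insert u t) := by
        rw [Finset.coe_insert]
        refine h2.insert fun b hb hub => ?_
        exact (h1 hb).1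
      have hsub : ↑(insert u t) ⊆ (↑S₀ : Set V)ᶜ := by
        rw [Finset.coe_insert]
        rintro x (rfl | hx)
        · exact fun hh => hu (Finset.mem_coe.mp hh)
        · exact hcompl (h1 hx)
      have hbig : t.card + 1 ≤ (G.induce ((↑S₀ : Set V)ᶜ)).cliqueNum := by
        have := aux_card_le_s8 G _ _ hclique hsub
        rwa [Finset.card_insert_of_notMem hut] at this
      -- β ≤ t.card + 1
      have hβle : β ≤ t.card + 1 := by
        rcases le_or_gt T₀.card (k - 1) with hc | hc
        · have : β ≤ (G.induce (nbr \ ↑T₀)).cliqueNum :=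
            Nat.sInf_le ⟨T₀, hT₀sub, hc, rfl⟩
          omega
        · -- T₀.card = k ≥ 1 : remove one vertex w
          have hT₀k : T₀.card ≤ k := le_trans (Finset.card_le_card hT₀S₀) hS₀card
          have hT₀pos : 0 < T₀.card := by omega
          obtain ⟨w, hw⟩ := Finset.card_pos.mp hT₀pos
          set T' : Finset V := T₀.erase w with hT'
          have hT'card : T'.card ≤ k - 1 := by
            rw [hT', Finset.card_erase_of_mem hw]
            omega
          have hT'sub : ↑T' ⊆ nbr := fun x hx =>
            hT₀sub (Finset.mem_coe.mpr (Finset.mem_of_mem_erase (Finset.mem_coe.mp hx)))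
          have hβT' : β ≤ (G.induce (nbr \ ↑T')).cliqueNum :=
            Nat.sInf_le ⟨T', hT'sub, hT'card, rfl⟩
          have hsub2 : (nbr \ ↑T') \ (↑({w} : Finset V) : Set V) ⊆ nbr \ ↑T₀ := by
            rintro x ⟨⟨hx1, hx2⟩, hx3⟩
            refine ⟨hx1, fun hxT₀ => hx2 ?_⟩
            rw [hT']
            simp only [Finset.coe_erase, Set.mem_diff, Finset.mem_coe, Set.mem_singleton_iff]
            exact ⟨hxT₀, by simpa using hx3⟩
          have hrem := aux_remove G (nbr \ ↑T') ({w} : Finset V)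
          have hmono := aux_mono G hsub2
          rw [Finset.card_singleton] at hrem
          rw [← h3] at hmono
          omega
      omega
  have : theta G k = β := le_antisymm (le_trans hθle hup) hβθ
  exact ⟨S, hScard, Finset.mem_insert_self u T, le_antisymm (hup.trans hβθ) hθle⟩
end

section
/- Let G = (V,E) be a finite simple graph, let k be a natural number, and let u, v ∈ V be two vertices such that N(v) ⊊ N(u) or N[v] ⊊ N[u]. If S ⊆ V is a set with |S| ≤ k, ω(G[V ∖ S]) = θ(G,k), v ∈ S, and u ∉ S, then the set S' = (S ∖ {v}) ∪ {u} also satisfies |S'| ≤ k and ω(G[V ∖ S']) = θ(G,k). -/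
open SimpleGraph

theorem domination_reduction {V : Type*} [Fintype V] [DecidableEq V]
    (G : SimpleGraph V) (k : ℕ) (u v : V)
    (hdom : G.neighborSet v ⊂ G.neighborSet u ∨
      insert v (G.neighborSet v) ⊂ insert u (G.neighborSet u))
    (S : Finset V) (hcard : S.card ≤ k)
    (hopt : (G.induce ((↑S : Set V)ᶜ)).cliqueNum = theta G k)
    (hv : v ∈ S) (hu : u ∉ S) :
    (insert u (S.erase v)).card ≤ k ∧
      (G.induce ((↑(insert u (S.erase v)) : Set V)ᶜ)).cliqueNum = theta G k := by
  classical
  set S' : Finset V := insert u (S.erase v) with hS'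
  have huv : u ≠ v := fun h => hu (h ▸ hv)
  -- neighbor containment
  have hnbr : ∀ w, w ∈ G.neighborSet v → w ≠ u → w ∈ G.neighborSet u := by
    intro w hw hwu
    rcases hdom with h | h
    · exact h.1 hw
    · have := h.1 (Set.mem_insert_of_mem _ hw)
      rcases this with h' | h'
      · exact absurd h' hwu
      · exact h'
  -- card of S'
  have hcard' : S'.card = S.card := by
    rw [hS', Finset.card_insert_of_notMem (fun h => hu (Finset.mem_of_mem_erase h)),
      Finset.card_erase_of_mem hv]
    have : 0 < S.card := Finset.card_pos.2 ⟨v, hv⟩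
    omega
  have hc : S'.card ≤ k := hcard' ▸ hcard
  refine ⟨hc, ?_⟩
  -- theta ≤ new clique number
  have hθle : theta G k ≤ (G.induce ((↑S' : Set V)ᶜ)).cliqueNum :=
    Nat.sInf_le ⟨S', hc, rfl⟩
  -- new clique number ≤ old clique number
  have hle : (G.induce ((↑S' : Set V)ᶜ)).cliqueNum ≤ (G.induce ((↑S : Set V)ᶜ)).cliqueNum := by
    obtain ⟨t, ht⟩ := (G.induce ((↑S' : Set V)ᶜ)).exists_isNClique_cliqueNum
    -- map from complement of S' to complement of S
    have hmemA : ∀ w : ((↑S' : Set V)ᶜ : Set V), (w : V) ≠ u ∧ ((w : V) = v ∨ (w : V) ∉ S) := by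
      rintro ⟨w, hw⟩
      simp only [Set.mem_compl_iff, Finset.coe_insert, Set.mem_insert_iff, Finset.mem_coe,
        Finset.mem_erase, hS'] at hw
      push_neg at hw
      refine ⟨hw.1, ?_⟩
      by_cases hwv : w = v
      · exact Or.inl hwv
      · exact Or.inr (hw.2 hwv)
    have hmemB : ∀ w : V, w ≠ v → w ∉ S' → w ∈ ((↑S : Set V)ᶜ : Set V) := by
      intro w hwv hw
      simp only [Set.mem_compl_iff, Finset.mem_coe]
      intro hws
      exact hw (by simp [hS', Finset.mem_insert, Finset.mem_erase, hwv, hws])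
    have huB : u ∈ ((↑S : Set V)ᶜ : Set V) := by simpa using hu
    let f : ((↑S' : Set V)ᶜ : Set V) → ((↑S : Set V)ᶜ : Set V) := fun w =>
      if h : (w : V) = v then ⟨u, huB⟩
      else ⟨(w : V), by
        rcases hmemA w with ⟨h1, h2⟩
        rcases h2 with h2 | h2
        · exact absurd h2 h
        · simpa using h2⟩
    have hfval : ∀ w : ((↑S' : Set V)ᶜ : Set V), ((f w : V) = u ∧ (w : V) = v) ∨
        ((f w : V) = (w : V) ∧ (w : V) ≠ v) := by
      intro w
      by_cases h : (w : V) = v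
      · left; exact ⟨by simp [f, h], h⟩
      · right; exact ⟨by simp [f, h], h⟩
    have hfinj : Function.Injective f := by
      intro a b hab
      rcases hfval a with ⟨ha1, ha2⟩ | ⟨ha1, ha2⟩ <;> rcases hfval b with ⟨hb1, hb2⟩ | ⟨hb1, hb2⟩
      · exact Subtype.ext (ha2.trans hb2.symm)
      · exfalso
        have : (b : V) = u := by rw [← hb1, ← hab]; exact ha1
        exact (hmemA b).1 this
      · exfalso
        have : (a : V) = u := by rw [← ha1, hab]; exact hb1
        exact (hmemA a).1 this
      · exact Subtype.ext (by rw [← ha1, hab]; exact hb1)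
    have hadj : ∀ a b : ((↑S' : Set V)ᶜ : Set V),
        (G.induce ((↑S' : Set V)ᶜ)).Adj a b → (G.induce ((↑S : Set V)ᶜ)).Adj (f a) (f b) := by
      intro a b hab
      have hG : G.Adj (a : V) (b : V) := hab
      rcases hfval a with ⟨ha1, ha2⟩ | ⟨ha1, ha2⟩ <;> rcases hfval b with ⟨hb1, hb2⟩ | ⟨hb1, hb2⟩
      · exact absurd (Subtype.ext (ha2.trans hb2.symm) : a = b) hab.ne
      · -- a = v, need u ~ b
        have hb : (b : V) ∈ G.neighborSet v := by
          rw [SimpleGraph.mem_neighborSet, ← ha2]; exact hG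
        have : G.Adj u (b : V) :=
          (G.mem_neighborSet u _).1 (hnbr _ hb (hmemA b).1)
        show G.Adj (f a : V) (f b : V)
        rw [ha1, hb1]; exact this
      · have ha : (a : V) ∈ G.neighborSet v := by
          rw [SimpleGraph.mem_neighborSet, ← hb2]; exact hG.symm
        have : G.Adj u (a : V) :=
          (G.mem_neighborSet u _).1 (hnbr _ ha (hmemA a).1)
        show G.Adj (f a : V) (f b : V)
        rw [ha1, hb1]; exact this.symm
      · show G.Adj (f a : V) (f b : V)
        rw [ha1, hb1]; exact hG
    have himg : (G.induce ((↑S : Set V)ᶜ)).IsNClique ((G.induce ((↑S' : Set V)ᶜ)).cliqueNum)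
        (t.map ⟨f, hfinj⟩) := by
      constructor
      · rintro x hx y hy hxy
        simp only [Finset.coe_map, Set.mem_image, Finset.mem_coe] at hx hy
        obtain ⟨a, ha, rfl⟩ := hx
        obtain ⟨b, hb, rfl⟩ := hy
        have hab : a ≠ b := fun h => hxy (by rw [h])
        exact hadj a b (ht.1 ha hb hab)
      · rw [Finset.card_map, ht.2]
    calc (G.induce ((↑S' : Set V)ᶜ)).cliqueNum
        = (t.map ⟨f, hfinj⟩).card := himg.card_eq.symm
      _ ≤ _ := SimpleGraph.IsClique.card_le_cliqueNum (tc := himg.isClique)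
  exact le_antisymm (hle.trans_eq hopt) hθle
end

section
/- Let G = (V,E) be a finite simple graph, let k be a natural number, and let 𝒞 be a finite family of pairwise disjoint cliques of G. Define f(𝒞, y) = Σ_{C ∈ 𝒞} max(0, |C| − y). Then the minimum, over all vertex subsets S ⊆ V with |S| ≤ k, of max_{C ∈ 𝒞} |C ∖ S| equals the smallest natural number y such that f(𝒞, y) ≤ k. -/
open SimpleGraph

theorem disjoint_cliques_interdiction {V : Type*} [Fintype V] [DecidableEq V]
    (G : SimpleGraph V) (k : ℕ) (𝒞 : Finset (Finset V))
    (hclique : ∀ C ∈ 𝒞, G.IsClique (C : Set V))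
    (hdisj : ∀ C ∈ 𝒞, ∀ D ∈ 𝒞, C ≠ D → Disjoint C D) :
    sInf {m | ∃ S : Finset V, S.card ≤ k ∧ (𝒞.sup fun C => (C \ S).card) = m} =
      sInf {y | (∑ C ∈ 𝒞, (C.card - y)) ≤ k} := by
  set L : Set ℕ := {m | ∃ S : Finset V, S.card ≤ k ∧ (𝒞.sup fun C => (C \ S).card) = m} with hL
  set R : Set ℕ := {y | (∑ C ∈ 𝒞, (C.card - y)) ≤ k} with hR
  have hRne : R.Nonempty := ⟨𝒞.sup Finset.card, by
    simp only [hR, Set.mem_setOf_eq]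
    have h0 : ∀ C ∈ 𝒞, C.card - 𝒞.sup Finset.card = 0 := fun C hC =>
      Nat.sub_eq_zero_of_le (Finset.le_sup hC)
    rw [Finset.sum_congr rfl h0]; simp⟩
  apply le_antisymm
  · have hy : sInf R ∈ R := Nat.sInf_mem hRne
    set y := sInf R with hydef
    have hT : ∀ C : Finset V, ∃ T ⊆ C, T.card = C.card - y :=
      fun C => Finset.exists_subset_card_eq (s := C) (Nat.sub_le _ _)
    choose T hTsub hTcard using hT
    set S := 𝒞.biUnion T with hSdef
    have hScard : S.card ≤ k := by
      calc S.card ≤ ∑ C ∈ 𝒞, (T C).card := Finset.card_biUnion_le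
        _ = ∑ C ∈ 𝒞, (C.card - y) := by simp [hTcard]
        _ ≤ k := hy
    refine le_trans (Nat.sInf_le (⟨S, hScard, rfl⟩ : _ ∈ L)) ?_
    apply Finset.sup_le
    intro C hC
    calc (C \ S).card ≤ (C \ T C).card :=
          Finset.card_le_card (Finset.sdiff_subset_sdiff le_rfl (Finset.subset_biUnion_of_mem T hC))
      _ = C.card - (T C).card := Finset.card_sdiff_of_subset (hTsub C)
      _ ≤ y := by rw [hTcard]; omega
  · have hLne : L.Nonempty := ⟨_, ∅, by simp, rfl⟩
    obtain ⟨S, hS, hsup⟩ := Nat.sInf_mem hLne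
    apply Nat.sInf_le
    show ∑ C ∈ 𝒞, (C.card - sInf L) ≤ k
    have hdisj' : (↑𝒞 : Set (Finset V)).PairwiseDisjoint fun C => C ∩ S := by
      intro C hC D hD hne
      exact (hdisj C hC D hD hne).mono Finset.inter_subset_left Finset.inter_subset_left
    calc ∑ C ∈ 𝒞, (C.card - sInf L) ≤ ∑ C ∈ 𝒞, (C ∩ S).card := by
          apply Finset.sum_le_sum
          intro C hC
          have h1 : (C \ S).card ≤ sInf L := by rw [← hsup]; exact Finset.le_sup (f := fun C => (C \ S).card) hC
          have h2 : (C \ S).card + (C ∩ S).card = C.card := Finset.card_sdiff_add_card_inter C S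
          omega
      _ = (𝒞.biUnion (fun C => C ∩ S)).card := (Finset.card_biUnion hdisj').symm
      _ ≤ S.card := Finset.card_le_card (Finset.biUnion_subset.2 fun C _ => Finset.inter_subset_right)
      _ ≤ k := hS
end

section
/- Let G = (V,E) be a finite simple graph, let k be a natural number, and let 𝒞 be a finite family of pairwise disjoint cliques of G. Then θ(G,k) is at least the smallest natural number y such that Σ_{C ∈ 𝒞} max(0, |C| − y) ≤ k (the disjoint lower bound). -/
open SimpleGraph

theorem disjoint_lower_bound {V : Type*} [Fintype V] [DecidableEq V]
    (G : SimpleGraph V) (k : ℕ) (𝒞 : Finset (Finset V))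
    (hclique : ∀ C ∈ 𝒞, G.IsClique (C : Set V))
    (hdisj : ∀ C ∈ 𝒞, ∀ D ∈ 𝒞, C ≠ D → Disjoint C D) :
    sInf {y | (∑ C ∈ 𝒞, (C.card - y)) ≤ k} ≤ theta G k := by
  have hne : {m | ∃ S : Finset V, S.card ≤ k ∧
      (G.induce ((↑S : Set V)ᶜ)).cliqueNum = m}.Nonempty :=
    ⟨_, ∅, by simp, rfl⟩
  obtain ⟨S, hSk, hSm⟩ := Nat.sInf_mem hne
  set m := theta G k with hm
  apply Nat.sInf_le
  simp only [Set.mem_setOf_eq]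
  -- for each clique C, C.card - m ≤ (C ∩ S).card
  have key : ∀ C ∈ 𝒞, C.card - m ≤ (C ∩ S).card := by
    intro C hC
    have hsplit : (C ∩ S).card + (C \ S).card = C.card := by
      rw [Finset.card_inter_add_card_sdiff]
    have hle : (C \ S).card ≤ m := by
      -- build clique in induced graph
      have hp : ∀ x ∈ C \ S, x ∈ ((↑S : Set V)ᶜ) := by
        intro x hx
        simp only [Set.mem_compl_iff, Finset.coe_mem, Finset.mem_coe]
        exact (Finset.mem_sdiff.mp hx).2
      set T : Finset ((↑S : Set V)ᶜ : Set V) :=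
        (C \ S).attach.image (fun x => ⟨x.1, hp x.1 x.2⟩) with hT
      have hTcard : T.card = (C \ S).card := by
        rw [hT, Finset.card_image_of_injective _ (fun a b hab => Subtype.ext (by
          simpa using congrArg Subtype.val hab)), Finset.card_attach]
      have hTclique : (G.induce ((↑S : Set V)ᶜ)).IsClique (T : Set _) := by
        intro a ha b hb hab
        simp only [hT, Finset.coe_image, Set.mem_image, Finset.mem_coe,
          Finset.mem_attach, true_and] at ha hb
        obtain ⟨⟨a', ha'⟩, rfl⟩ := ha
        obtain ⟨⟨b', hb'⟩, rfl⟩ := hb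
        have : G.Adj a' b' := by
          apply hclique C hC
          · exact (Finset.mem_sdiff.mp ha').1
          · exact (Finset.mem_sdiff.mp hb').1
          · intro h; exact hab (by simp [h])
        exact this
      calc (C \ S).card = T.card := hTcard.symm
        _ ≤ (G.induce ((↑S : Set V)ᶜ)).cliqueNum := hTclique.card_le_cliqueNum
        _ = m := hSm
    omega
  calc ∑ C ∈ 𝒞, (C.card - m) ≤ ∑ C ∈ 𝒞, (C ∩ S).card :=
        Finset.sum_le_sum key
    _ = (𝒞.biUnion (· ∩ S)).card := by
        rw [Finset.card_biUnion]
        intro C hC D hD hCD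
        exact Finset.disjoint_of_subset_left Finset.inter_subset_left
          (Finset.disjoint_of_subset_right Finset.inter_subset_left (hdisj C hC D hD hCD))
    _ ≤ S.card := Finset.card_le_card (by
        intro x hx
        obtain ⟨C, _, hxC⟩ := Finset.mem_biUnion.mp hx
        exact (Finset.mem_inter.mp hxC).2)
    _ ≤ k := hSk
end
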